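/- arXiv:1407.1258 — 3 statements merged into one kernel-verified Lean document; each statement's English description precedes it below -/
import Mathlib

section
/- Let C ≠ 0, a, b be real constants and set f(u) = C·(u+b)^(2−4a), defined for u+b > 0. Let u(t,x) be a smooth real-valued solution of the gKN equation with f, such that u_x(t,x) ≠ 0 and u(t,x)+b > 0 for all (t,x). Then the function P(t,x) = (u(t,x)+b) − 3at·u_t(t,x) − ax·u_x(t,x) satisfies the symmetry determining equation ∂_t P − ∂_x³ P + 3(u_xx/u_x)∂_x² P − (3/2)(u_xx²/u_x²)∂_x P + (f(u)/u_x²)∂_x P − (f'(u)/u_x)P = 0 at every point (t,x). (This is the point symmetry X_{3b} = 3at∂_t + ax∂_x + (u+b)∂_u of the gKN equation.) -/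
open Real

/-- Partial derivative with respect to the second (spatial) variable. -/
noncomputable def pdx (u : ℝ → ℝ → ℝ) : ℝ → ℝ → ℝ := fun t x => deriv (fun y => u t y) x

/-- Partial derivative with respect to the first (time) variable. -/
noncomputable def pdt (u : ℝ → ℝ → ℝ) : ℝ → ℝ → ℝ := fun t x => deriv (fun s => u s x) t

/-- `u` solves the generalized Krichever-Novikov equation with nonlinearity `f`:
`u_t = u_xxx - (3/2) u_xx^2/u_x + f(u)/u_x`. -/
def isGKN (f : ℝ → ℝ) (u : ℝ → ℝ → ℝ) : Prop :=
  ∀ t x, pdt u t x =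
    pdx (pdx (pdx u)) t x - (3/2) * (pdx (pdx u) t x)^2 / pdx u t x + f (u t x) / pdx u t x

/-- The symmetry determining equation for a characteristic function `P` along `u`:
`∂_t P - ∂_x^3 P + 3 (u_xx/u_x) ∂_x^2 P - (3/2)(u_xx^2/u_x^2) ∂_x P + (f(u)/u_x^2) ∂_x P
 - (f'(u)/u_x) P = 0`. -/
def symmDet (f : ℝ → ℝ) (u P : ℝ → ℝ → ℝ) : Prop :=
  ∀ t x,
    pdt P t x - pdx (pdx (pdx P)) t x
      + 3 * (pdx (pdx u) t x / pdx u t x) * pdx (pdx P) t x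
      - (3/2) * ((pdx (pdx u) t x)^2 / (pdx u t x)^2) * pdx P t x
      + (f (u t x) / (pdx u t x)^2) * pdx P t x
      - (deriv f (u t x) / pdx u t x) * P t x = 0

private lemma hasDerivAt_pdx' {v : ℝ → ℝ → ℝ} (hv : ContDiff ℝ (⊤:ℕ∞) (Function.uncurry v)) (t x : ℝ) :
    HasDerivAt (fun y => v t y) (pdx v t x) x := by
  have h1 : DifferentiableAt ℝ (fun y : ℝ => ((t, y) : ℝ × ℝ)) x :=
    DifferentiableAt.prodMk (differentiableAt_const t) differentiableAt_id
  exact ((hv.differentiable (by simp) (t, x)).comp x h1).hasDerivAt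

private lemma hasDerivAt_pdt' {v : ℝ → ℝ → ℝ} (hv : ContDiff ℝ (⊤:ℕ∞) (Function.uncurry v)) (t x : ℝ) :
    HasDerivAt (fun s => v s x) (pdt v t x) t := by
  have h1 : DifferentiableAt ℝ (fun s : ℝ => ((s, x) : ℝ × ℝ)) t :=
    DifferentiableAt.prodMk differentiableAt_id (differentiableAt_const x)
  exact ((hv.differentiable (by simp) (t, x)).comp t h1).hasDerivAt

private lemma pdx_eq_fderiv {v : ℝ → ℝ → ℝ} (hv : ContDiff ℝ (⊤:ℕ∞) (Function.uncurry v)) (t x : ℝ) :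
    pdx v t x = fderiv ℝ (Function.uncurry v) (t, x) (0, 1) := by
  have h1 : HasDerivAt (fun y : ℝ => ((t, y) : ℝ × ℝ)) ((0 : ℝ), (1 : ℝ)) x :=
    HasDerivAt.prodMk (hasDerivAt_const x t) (hasDerivAt_id x)
  have h2 : HasDerivAt (fun y => v t y) (fderiv ℝ (Function.uncurry v) (t, x) (0, 1)) x :=
    ((hv.differentiable (by simp) (t, x)).hasFDerivAt).comp_hasDerivAt x h1
  exact h2.deriv

private lemma pdt_eq_fderiv {v : ℝ → ℝ → ℝ} (hv : ContDiff ℝ (⊤:ℕ∞) (Function.uncurry v)) (t x : ℝ) :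
    pdt v t x = fderiv ℝ (Function.uncurry v) (t, x) (1, 0) := by
  have h1 : HasDerivAt (fun s : ℝ => ((s, x) : ℝ × ℝ)) ((1 : ℝ), (0 : ℝ)) t :=
    HasDerivAt.prodMk (hasDerivAt_id t) (hasDerivAt_const t x)
  have h2 : HasDerivAt (fun s => v s x) (fderiv ℝ (Function.uncurry v) (t, x) (1, 0)) t :=
    HasFDerivAt.comp_hasDerivAt (l := Function.uncurry v) t ((hv.differentiable (by simp) (t, x)).hasFDerivAt) h1
  exact h2.deriv

private lemma contDiff_pdx' {v : ℝ → ℝ → ℝ} (hv : ContDiff ℝ (⊤:ℕ∞) (Function.uncurry v)) :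
    ContDiff ℝ (⊤:ℕ∞) (Function.uncurry (pdx v)) := by
  have he : Function.uncurry (pdx v) = fun p : ℝ × ℝ => (fderiv ℝ (Function.uncurry v) p) (0, 1) := by
    funext p
    exact pdx_eq_fderiv hv p.1 p.2
  rw [he]
  exact (ContinuousLinearMap.apply ℝ ℝ ((0 : ℝ), (1 : ℝ))).contDiff.comp (hv.fderiv_right (by exact_mod_cast le_top))

private lemma contDiff_pdt' {v : ℝ → ℝ → ℝ} (hv : ContDiff ℝ (⊤:ℕ∞) (Function.uncurry v)) :
    ContDiff ℝ (⊤:ℕ∞) (Function.uncurry (pdt v)) := by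
  have he : Function.uncurry (pdt v) = fun p : ℝ × ℝ => (fderiv ℝ (Function.uncurry v) p) (1, 0) := by
    funext p
    exact pdt_eq_fderiv hv p.1 p.2
  rw [he]
  exact (ContinuousLinearMap.apply ℝ ℝ ((1 : ℝ), (0 : ℝ))).contDiff.comp (hv.fderiv_right (by exact_mod_cast le_top))

private lemma clairaut' {v : ℝ → ℝ → ℝ} (hv : ContDiff ℝ (⊤:ℕ∞) (Function.uncurry v)) (t x : ℝ) :
    pdt (pdx v) t x = pdx (pdt v) t x := by
  set F := Function.uncurry v with hF
  have hdF : Differentiable ℝ F := hv.differentiable (by simp)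
  have hdF' : Differentiable ℝ (fderiv ℝ F) := (hv.fderiv_right (m := (⊤:ℕ∞)) (by exact_mod_cast le_top)).differentiable (by simp)
  have hsymm := second_derivative_symmetric (f := F) (f' := fderiv ℝ F)
    (f'' := fderiv ℝ (fderiv ℝ F) (t, x)) (fun p => (hdF p).hasFDerivAt)
    ((hdF' (t, x)).hasFDerivAt) ((1:ℝ), (0:ℝ)) ((0:ℝ), (1:ℝ))
  have hL : pdt (pdx v) t x = fderiv ℝ (fderiv ℝ F) (t, x) (1, 0) (0, 1) := by
    have hfe : (fun s => pdx v s x) = (fun s => (fderiv ℝ F (s, x)) (0, 1)) :=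
      funext fun s => pdx_eq_fderiv hv s x
    have h1 : HasDerivAt (fun s : ℝ => ((s, x) : ℝ × ℝ)) ((1 : ℝ), (0 : ℝ)) t :=
      HasDerivAt.prodMk (hasDerivAt_id t) (hasDerivAt_const t x)
    have h3 : HasDerivAt (fun s : ℝ => fderiv ℝ F (s, x)) (fderiv ℝ (fderiv ℝ F) (t, x) (1, 0)) t :=
      ((hdF' (t, x)).hasFDerivAt).comp_hasDerivAt t h1
    have h4 : HasDerivAt (fun s : ℝ => (fderiv ℝ F (s, x)) (0, 1))
        (fderiv ℝ (fderiv ℝ F) (t, x) (1, 0) (0, 1)) t :=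
      ((ContinuousLinearMap.apply ℝ ℝ ((0 : ℝ), (1 : ℝ))).hasFDerivAt).comp_hasDerivAt t h3
    show deriv (fun s => pdx v s x) t = _
    rw [hfe]
    exact h4.deriv
  have hR : pdx (pdt v) t x = fderiv ℝ (fderiv ℝ F) (t, x) (0, 1) (1, 0) := by
    have hfe : (fun y => pdt v t y) = (fun y => (fderiv ℝ F (t, y)) (1, 0)) :=
      funext fun y => pdt_eq_fderiv hv t y
    have h1 : HasDerivAt (fun y : ℝ => ((t, y) : ℝ × ℝ)) ((0 : ℝ), (1 : ℝ)) x :=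
      HasDerivAt.prodMk (hasDerivAt_const x t) (hasDerivAt_id x)
    have h3 : HasDerivAt (fun y : ℝ => fderiv ℝ F (t, y)) (fderiv ℝ (fderiv ℝ F) (t, x) (0, 1)) x :=
      ((hdF' (t, x)).hasFDerivAt).comp_hasDerivAt x h1
    have h4 : HasDerivAt (fun y : ℝ => (fderiv ℝ F (t, y)) (1, 0))
        (fderiv ℝ (fderiv ℝ F) (t, x) (0, 1) (1, 0)) x :=
      ((ContinuousLinearMap.apply ℝ ℝ ((1 : ℝ), (0 : ℝ))).hasFDerivAt).comp_hasDerivAt x h3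
    show deriv (fun y => pdt v t y) x = _
    rw [hfe]
    exact h4.deriv
  rw [hL, hR, hsymm]

set_option maxHeartbeats 1000000 in
/-- Point symmetry `X₃b = 3at ∂_t + ax ∂_x + (u+b) ∂_u` of the gKN equation with
`f(u) = C (u+b)^(2-4a)` (real power, `u+b > 0`): its characteristic
`P = (u+b) - 3at u_t - ax u_x` satisfies the symmetry determining equation. -/
theorem gKN_point_symmetry_X3b (C a b : ℝ) (hC : C ≠ 0)
    (u : ℝ → ℝ → ℝ) (hu : ContDiff ℝ (⊤ : ℕ∞) (Function.uncurry u))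
    (hux : ∀ t x, pdx u t x ≠ 0)
    (hub : ∀ t x, u t x + b > 0)
    (hsol : isGKN (fun v => C * (v + b) ^ ((2 : ℝ) - 4 * a)) u) :
    symmDet (fun v => C * (v + b) ^ ((2 : ℝ) - 4 * a)) u
      (fun t x => (u t x + b) - 3 * a * t * pdt u t x - a * x * pdx u t x) := by
  set P : ℝ → ℝ → ℝ :=
    fun t x => (u t x + b) - 3 * a * t * pdt u t x - a * x * pdx u t x with hPdef
  have hu1 := contDiff_pdx' hu
  have hu2 := contDiff_pdx' hu1
  have hu3 := contDiff_pdx' hu2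
  have hws := contDiff_pdt' hu
  have hw1 := contDiff_pdx' hws
  have hw2 := contDiff_pdx' hw1
  have c1 : ∀ t x, pdt (pdx u) t x = pdx (pdt u) t x := clairaut' hu
  have c1' : pdt (pdx u) = pdx (pdt u) := funext fun t => funext fun x => c1 t x
  have c2 : ∀ t x, pdt (pdx (pdx u)) t x = pdx (pdx (pdt u)) t x := by
    intro t x; rw [clairaut' hu1 t x, c1']
  have c2' : pdt (pdx (pdx u)) = pdx (pdx (pdt u)) := funext fun t => funext fun x => c2 t x
  have c3 : ∀ t x, pdt (pdx (pdx (pdx u))) t x = pdx (pdx (pdx (pdt u))) t x := by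
    intro t x; rw [clairaut' hu2 t x, c2']
  have hne : ∀ s y, u s y + b ≠ 0 := fun s y => ne_of_gt (hub s y)
  intro t x
  -- first spatial derivative of P, everywhere
  have PX : ∀ s y, pdx P s y = pdx u s y - 3*a*s * pdx (pdt u) s y
      - (a * pdx u s y + a*y * pdx (pdx u) s y) := by
    intro s y
    have h1 : HasDerivAt (fun z => u s z + b) (pdx u s y) y :=
      (hasDerivAt_pdx' hu s y).add_const b
    have h2 : HasDerivAt (fun z => 3*a*s * pdt u s z) (3*a*s * pdx (pdt u) s y) y :=
      (hasDerivAt_pdx' hws s y).const_mul _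
    have h3 : HasDerivAt (fun z => a*z * pdx u s z)
        (a * pdx u s y + a*y * pdx (pdx u) s y) y := by
      have h := ((hasDerivAt_id y).const_mul a).fun_mul (hasDerivAt_pdx' hu1 s y)
      convert h using 1
      · rfl
      · rfl
      · rfl
      simp only [id_eq]
      ring
    exact ((h1.sub h2).sub h3).deriv
  have PXfun : (fun z => pdx P t z) = (fun z => pdx u t z - 3*a*t * pdx (pdt u) t z
      - (a * pdx u t z + a*z * pdx (pdx u) t z)) := funext fun z => PX t z
  -- second spatial derivative of P, everywhere in y at time t
  have PXX : ∀ y, pdx (pdx P) t y = pdx (pdx u) t y - 3*a*t * pdx (pdx (pdt u)) t y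
      - (2*a * pdx (pdx u) t y + a*y * pdx (pdx (pdx u)) t y) := by
    intro y
    show deriv (fun z => pdx P t z) y = _
    rw [PXfun]
    have h1 := hasDerivAt_pdx' hu1 t y
    have h2 : HasDerivAt (fun z => 3*a*t * pdx (pdt u) t z)
        (3*a*t * pdx (pdx (pdt u)) t y) y := (hasDerivAt_pdx' hw1 t y).const_mul _
    have h3 : HasDerivAt (fun z => a * pdx u t z + a*z * pdx (pdx u) t z)
        (2*a * pdx (pdx u) t y + a*y * pdx (pdx (pdx u)) t y) y := by
      have ha := (hasDerivAt_pdx' hu1 t y).const_mul a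
      have hb := ((hasDerivAt_id y).const_mul a).fun_mul (hasDerivAt_pdx' hu2 t y)
      convert ha.add hb using 1
      · rfl
      · rfl
      · rfl
      simp only [id_eq]
      ring
    exact ((h1.sub h2).sub h3).deriv
  have PXXfun : (fun z => pdx (pdx P) t z) = (fun z => pdx (pdx u) t z
      - 3*a*t * pdx (pdx (pdt u)) t z
      - (2*a * pdx (pdx u) t z + a*z * pdx (pdx (pdx u)) t z)) := funext PXX
  -- third spatial derivative of P at the point
  have PXXX : pdx (pdx (pdx P)) t x = pdx (pdx (pdx u)) t x
      - 3*a*t * pdx (pdx (pdx (pdt u))) t x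
      - (3*a * pdx (pdx (pdx u)) t x + a*x * pdx (pdx (pdx (pdx u))) t x) := by
    show deriv (fun z => pdx (pdx P) t z) x = _
    rw [PXXfun]
    have h1 := hasDerivAt_pdx' hu2 t x
    have h2 : HasDerivAt (fun z => 3*a*t * pdx (pdx (pdt u)) t z)
        (3*a*t * pdx (pdx (pdx (pdt u))) t x) x := (hasDerivAt_pdx' hw2 t x).const_mul _
    have h3 : HasDerivAt (fun z => 2*a * pdx (pdx u) t z + a*z * pdx (pdx (pdx u)) t z)
        (3*a * pdx (pdx (pdx u)) t x + a*x * pdx (pdx (pdx (pdx u))) t x) x := by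
      have ha := (hasDerivAt_pdx' hu2 t x).const_mul (2*a)
      have hb := ((hasDerivAt_id x).const_mul a).fun_mul (hasDerivAt_pdx' hu3 t x)
      convert ha.add hb using 1
      · rfl
      · rfl
      · rfl
      simp only [id_eq]
      ring
    exact ((h1.sub h2).sub h3).deriv
  -- time derivative of P at the point
  have PT : pdt P t x = pdt u t x - (3*a * pdt u t x + 3*a*t * pdt (pdt u) t x)
      - a*x * pdx (pdt u) t x := by
    have h1 : HasDerivAt (fun s => u s x + b) (pdt u t x) t :=
      (hasDerivAt_pdt' hu t x).add_const b
    have h2 : HasDerivAt (fun s => 3*a*s * pdt u s x)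
        (3*a * pdt u t x + 3*a*t * pdt (pdt u) t x) t := by
      have h := ((hasDerivAt_id t).const_mul (3*a)).fun_mul (hasDerivAt_pdt' hws t x)
      convert h using 1
      · rfl
      · rfl
      · rfl
      simp only [id_eq]
      ring
    have h3 : HasDerivAt (fun s => a*x * pdx u s x) (a*x * pdx (pdt u) t x) t := by
      have h := (hasDerivAt_pdt' hu1 t x).const_mul (a*x)
      rwa [c1 t x] at h
    exact ((h1.sub h2).sub h3).deriv
  -- spatial derivative of the equation
  have hfx : (fun y => pdt u t y) = (fun y => pdx (pdx (pdx u)) t y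
      - 3/2 * (pdx (pdx u) t y)^2 / pdx u t y
      + C * (u t y + b) ^ ((2:ℝ) - 4*a) / pdx u t y) := funext fun y => hsol t y
  have hLx : HasDerivAt (fun y => pdt u t y) (pdx (pdt u) t x) x := hasDerivAt_pdx' hws t x
  rw [hfx] at hLx
  have hBx := (((hasDerivAt_pdx' hu2 t x).fun_pow 2).const_mul (3/2 : ℝ)).div
    (hasDerivAt_pdx' hu1 t x) (hux t x)
  have hCx := ((((hasDerivAt_pdx' hu t x).add_const b).rpow_const (p := (2:ℝ) - 4*a)
    (Or.inl (hne t x))).const_mul C).div (hasDerivAt_pdx' hu1 t x) (hux t x)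
  have E1 := hLx.unique (((hasDerivAt_pdx' hu3 t x).sub hBx).add hCx)
  -- time derivative of the equation
  have hfs : (fun s => pdt u s x) = (fun s => pdx (pdx (pdx u)) s x
      - 3/2 * (pdx (pdx u) s x)^2 / pdx u s x
      + C * (u s x + b) ^ ((2:ℝ) - 4*a) / pdx u s x) := funext fun s => hsol s x
  have hLt : HasDerivAt (fun s => pdt u s x) (pdt (pdt u) t x) t := hasDerivAt_pdt' hws t x
  rw [hfs] at hLt
  have h3t : HasDerivAt (fun s => pdx (pdx (pdx u)) s x) (pdx (pdx (pdx (pdt u))) t x) t := by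
    have h := hasDerivAt_pdt' hu3 t x; rwa [c3 t x] at h
  have h2t : HasDerivAt (fun s => pdx (pdx u) s x) (pdx (pdx (pdt u)) t x) t := by
    have h := hasDerivAt_pdt' hu2 t x; rwa [c2 t x] at h
  have h1t : HasDerivAt (fun s => pdx u s x) (pdx (pdt u) t x) t := by
    have h := hasDerivAt_pdt' hu1 t x; rwa [c1 t x] at h
  have h0t : HasDerivAt (fun s => u s x) (pdt u t x) t := hasDerivAt_pdt' hu t x
  have hBt := (((h2t.fun_pow 2).const_mul (3/2 : ℝ)).div h1t (hux t x))
  have hCt := ((((h0t.add_const b).rpow_const (p := (2:ℝ) - 4*a) (Or.inl (hne t x))).const_mul C).div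
    h1t (hux t x))
  have ET := hLt.unique ((h3t.sub hBt).add hCt)
  -- the equation itself
  have E0 : pdt u t x = pdx (pdx (pdx u)) t x - 3/2 * (pdx (pdx u) t x)^2 / pdx u t x
      + C * (u t x + b) ^ ((2:ℝ) - 4*a) / pdx u t x := hsol t x
  -- derivative of f
  have hdf : deriv (fun v => C * (v + b) ^ ((2:ℝ) - 4 * a)) (u t x)
      = C * (1 * ((2:ℝ) - 4 * a) * (u t x + b) ^ ((2:ℝ) - 4 * a - 1)) :=
    ((((hasDerivAt_id (u t x)).add_const b).rpow_const (Or.inl (hne t x))).const_mul C).deriv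
  have hPv : P t x = (u t x + b) - 3*a*t * pdt u t x - a*x * pdx u t x := rfl
  have hsplit : (u t x + b) ^ ((2:ℝ) - 4*a)
      = (u t x + b) ^ ((2:ℝ) - 4*a - 1) * (u t x + b) := by
    conv_lhs => rw [show ((2:ℝ) - 4*a) = ((2:ℝ) - 4*a - 1) + 1 by ring,
      Real.rpow_add_one (hne t x)]
  beta_reduce
  rw [PT, PXXX, PXX x, PX t x, hPv, hdf, ET, E1, E0, hsplit]
  have hU1 : pdx u t x ≠ 0 := hux t x
  generalize hB : (u t x + b) ^ ((2:ℝ) - 4*a - 1) = B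
  generalize h4 : pdx (pdx (pdx (pdx u))) t x = U4
  generalize hw3 : pdx (pdx (pdx (pdt u))) t x = W3
  generalize hw2 : pdx (pdx (pdt u)) t x = W2
  generalize hw1 : pdx (pdt u) t x = W1
  generalize h3 : pdx (pdx (pdx u)) t x = U3
  generalize h2 : pdx (pdx u) t x = U2
  generalize h1 : pdx u t x = U1 at hU1 ⊢
  generalize hU : u t x = U
  field_simp
  ring
end

section
/- Let g(u) = C₁u² + C₂u + C₃ be a quadratic polynomial with real coefficients which is not identically zero, and set f(u) = g(u)². Let u(t,x) be a smooth real-valued solution of the gKN equation with f, such that u_x(t,x) ≠ 0 for all (t,x). Define T₂ᵦ(t,x) = g(u)/u_x and X₂ᵦ(t,x) = u_xxx·g(u)/u_x² − (1/2)·u_xx²·g(u)/u_x³ − 2·u_xx·g'(u)/u_x + (1/3)·g(u)³/u_x³ + 2·u_x·g''(u), where all derivatives of u are evaluated at (t,x). Then ∂_t T₂ᵦ(t,x) + ∂_x X₂ᵦ(t,x) = 0 at every point (t,x). (This is the first-order conservation law admitted by the gKN equation precisely when f is the square of a quadratic polynomial.) -/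
open Real

/-- A conservation law: `∂_t T + ∂_x X = 0` at every point. -/
def consLaw (T X : ℝ → ℝ → ℝ) : Prop := ∀ t x, pdt T t x + pdx X t x = 0

section Aux

open Function

private lemma hasDerivAt_slice_x' {u : ℝ → ℝ → ℝ} (hu : ContDiff ℝ (⊤:ℕ∞) (uncurry u)) (t x : ℝ) :
    HasDerivAt (fun y => u t y) (fderiv ℝ (uncurry u) (t, x) (0, 1)) x := by
  have h1 : HasDerivAt (fun y : ℝ => ((t, y) : ℝ × ℝ)) ((0:ℝ), (1:ℝ)) x :=
    (hasDerivAt_const x t).prodMk (hasDerivAt_id x)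
  exact ((hu.differentiable (by norm_num) (t, x)).hasFDerivAt).comp_hasDerivAt x h1

private lemma hasDerivAt_slice_t' {u : ℝ → ℝ → ℝ} (hu : ContDiff ℝ (⊤:ℕ∞) (uncurry u)) (t x : ℝ) :
    HasDerivAt (fun s => u s x) (fderiv ℝ (uncurry u) (t, x) (1, 0)) t := by
  have h1 : HasDerivAt (fun s : ℝ => ((s, x) : ℝ × ℝ)) ((1:ℝ), (0:ℝ)) t :=
    (hasDerivAt_id t).prodMk (hasDerivAt_const t x)
  exact ((hu.differentiable (by norm_num) (t, x)).hasFDerivAt).comp_hasDerivAt t h1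

private lemma uncurry_pdx_eq' {u : ℝ → ℝ → ℝ} (hu : ContDiff ℝ (⊤:ℕ∞) (uncurry u)) :
    uncurry (pdx u) = fun p : ℝ × ℝ => fderiv ℝ (uncurry u) p (0, 1) := by
  funext p
  exact (hasDerivAt_slice_x' hu p.1 p.2).deriv

private lemma uncurry_pdt_eq' {u : ℝ → ℝ → ℝ} (hu : ContDiff ℝ (⊤:ℕ∞) (uncurry u)) :
    uncurry (pdt u) = fun p : ℝ × ℝ => fderiv ℝ (uncurry u) p (1, 0) := by
  funext p
  exact (hasDerivAt_slice_t' hu p.1 p.2).deriv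

private lemma top_add_one' : ((⊤:ℕ∞) : WithTop ℕ∞) + 1 ≤ ((⊤:ℕ∞) : WithTop ℕ∞) := by
  norm_num

private lemma contDiff_pdx'_s10 {u : ℝ → ℝ → ℝ} (hu : ContDiff ℝ (⊤:ℕ∞) (uncurry u)) :
    ContDiff ℝ (⊤:ℕ∞) (uncurry (pdx u)) := by
  rw [uncurry_pdx_eq' hu]
  exact (hu.fderiv_right top_add_one').clm_apply contDiff_const

private lemma contDiff_pdt'_s10 {u : ℝ → ℝ → ℝ} (hu : ContDiff ℝ (⊤:ℕ∞) (uncurry u)) :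
    ContDiff ℝ (⊤:ℕ∞) (uncurry (pdt u)) := by
  rw [uncurry_pdt_eq' hu]
  exact (hu.fderiv_right top_add_one').clm_apply contDiff_const

private lemma pdt_pdx_comm' {u : ℝ → ℝ → ℝ} (hu : ContDiff ℝ (⊤:ℕ∞) (uncurry u)) (t x : ℝ) :
    pdt (pdx u) t x = pdx (pdt u) t x := by
  have hfd : ContDiff ℝ (⊤:ℕ∞) (fderiv ℝ (uncurry u)) := hu.fderiv_right top_add_one'
  have key : ∀ v w : ℝ × ℝ,
      fderiv ℝ (fun p : ℝ × ℝ => fderiv ℝ (uncurry u) p v) (t, x) w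
        = fderiv ℝ (fderiv ℝ (uncurry u)) (t, x) w v := by
    intro v w
    rw [fderiv_clm_apply ((hfd.differentiable (by norm_num)) (t, x)) (differentiableAt_const v)]
    simp
  have h1 : pdt (pdx u) t x = fderiv ℝ (uncurry (pdx u)) (t, x) (1, 0) :=
    (hasDerivAt_slice_t' (contDiff_pdx'_s10 hu) t x).deriv
  have h2 : pdx (pdt u) t x = fderiv ℝ (uncurry (pdt u)) (t, x) (0, 1) :=
    (hasDerivAt_slice_x' (contDiff_pdt'_s10 hu) t x).deriv
  rw [h1, h2, uncurry_pdx_eq' hu, uncurry_pdt_eq' hu, key, key]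
  have hsymm := (hu.contDiffAt (x := (t,x))).isSymmSndFDerivAt
    (by rw [minSmoothness_of_isRCLikeNormedField, show ((2:WithTop ℕ∞)) = ((2:ℕ∞):WithTop ℕ∞) from rfl]; exact WithTop.coe_le_coe.mpr le_top)
  exact hsymm.eq (1,0) (0,1)

private lemma HasDerivAt.congr_d {f : ℝ → ℝ} {a b x : ℝ} (h : HasDerivAt f a x) (e : a = b) :
    HasDerivAt f b x := e ▸ h

end Aux

/-- The first-order conservation law `(T₂ᵦ, X₂ᵦ)` of the gKN equation with
`f = g²`, `g` a nonzero quadratic polynomial. -/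
theorem gKN_conservation_law_T2b (C₁ C₂ C₃ : ℝ) (hg0 : ¬ (C₁ = 0 ∧ C₂ = 0 ∧ C₃ = 0))
    (g : ℝ → ℝ) (hg : ∀ v, g v = C₁ * v^2 + C₂ * v + C₃)
    (u : ℝ → ℝ → ℝ) (hu : ContDiff ℝ (⊤ : ℕ∞) (Function.uncurry u))
    (hux : ∀ t x, pdx u t x ≠ 0)
    (hsol : isGKN (fun v => (g v)^2) u) :
    consLaw (fun t x => (g (u t x)) / (pdx u t x))
      (fun t x =>
        (pdx (pdx (pdx u)) t x) * (g (u t x)) / (pdx u t x)^2 - (1/2) * (pdx (pdx u) t x)^2 * (g (u t x)) / (pdx u t x)^3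
          - 2 * (pdx (pdx u) t x) * (deriv g (u t x)) / (pdx u t x) + (1/3) * (g (u t x))^3 / (pdx u t x)^3
          + 2 * (pdx u t x) * (deriv (deriv g) (u t x))) := by
  intro t x
  -- facts about g
  have hg' : ∀ v, HasDerivAt g (2*C₁*v + C₂) v := by
    intro v
    have hgfun : g = fun v : ℝ => C₁*v^2 + C₂*v + C₃ := funext hg
    rw [hgfun]
    have h2 : HasDerivAt (fun v : ℝ => v^2) (2*v) v := by
      simpa using hasDerivAt_pow 2 v
    have h3 := ((h2.const_mul C₁).add ((hasDerivAt_id v).const_mul C₂)).add_const C₃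
    exact h3.congr_d (by ring)
  have hdg : deriv g = fun v => 2*C₁*v + C₂ := funext fun v => (hg' v).deriv
  have hg'' : ∀ v, HasDerivAt (deriv g) (2*C₁) v := by
    intro v
    rw [hdg]
    have h3 := ((hasDerivAt_id v).const_mul (2*C₁)).add_const C₂
    exact h3.congr_d (by ring)
  have e1 : deriv g (u t x) = 2*C₁*(u t x) + C₂ := (hg' (u t x)).deriv
  have e2 : deriv (deriv g) (u t x) = 2*C₁ := (hg'' (u t x)).deriv
  -- smoothness of iterated derivatives
  have hu1 := contDiff_pdx'_s10 hu
  have hu2 := contDiff_pdx'_s10 hu1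
  have hu3 := contDiff_pdx'_s10 hu2
  -- spatial derivatives at (t, x)
  have D0 : HasDerivAt (fun y => u t y) (pdx u t x) x :=
    (hasDerivAt_slice_x' hu t x).differentiableAt.hasDerivAt
  have D1 : HasDerivAt (fun y => pdx u t y) (pdx (pdx u) t x) x :=
    (hasDerivAt_slice_x' hu1 t x).differentiableAt.hasDerivAt
  have D2 : HasDerivAt (fun y => pdx (pdx u) t y) (pdx (pdx (pdx u)) t x) x :=
    (hasDerivAt_slice_x' hu2 t x).differentiableAt.hasDerivAt
  have D3 : HasDerivAt (fun y => pdx (pdx (pdx u)) t y) (pdx (pdx (pdx (pdx u))) t x) x :=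
    (hasDerivAt_slice_x' hu3 t x).differentiableAt.hasDerivAt
  -- time derivatives at (t, x)
  have dt0 : HasDerivAt (fun s => u s x) (pdt u t x) t :=
    (hasDerivAt_slice_t' hu t x).differentiableAt.hasDerivAt
  have dt1 : HasDerivAt (fun s => pdx u s x) (pdt (pdx u) t x) t :=
    (hasDerivAt_slice_t' hu1 t x).differentiableAt.hasDerivAt
  have hV1 := hux t x
  -- chain rule for g ∘ u in x and in t
  have dgx : HasDerivAt (fun y => g (u t y)) ((2*C₁*(u t x) + C₂) * pdx u t x) x :=
    (hg' (u t x)).comp x D0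
  have dgt : HasDerivAt (fun s => g (u s x)) ((2*C₁*(u t x) + C₂) * pdt u t x) t :=
    (hg' (u t x)).comp t dt0
  have dGp : HasDerivAt (fun y => deriv g (u t y)) (2*C₁ * pdx u t x) x :=
    (hg'' (u t x)).comp x D0
  -- mixed derivative via the equation
  have hpdtu : pdt u = fun a b => pdx (pdx (pdx u)) a b
      - (3/2) * (pdx (pdx u) a b)^2 / pdx u a b + (g (u a b))^2 / pdx u a b :=
    funext fun a => funext fun b => hsol a b
  have dRHS : HasDerivAt (fun y => pdx (pdx (pdx u)) t y
      - (3/2) * (pdx (pdx u) t y)^2 / pdx u t y + (g (u t y))^2 / pdx u t y)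
      (pdx (pdx (pdx (pdx u))) t x
        - (3 * pdx (pdx u) t x * pdx (pdx (pdx u)) t x * pdx u t x
            - (3/2) * (pdx (pdx u) t x)^3) / (pdx u t x)^2
        + (2 * g (u t x) * (2*C₁*(u t x) + C₂) * (pdx u t x)^2
            - (g (u t x))^2 * pdx (pdx u) t x) / (pdx u t x)^2) x := by
    have h := (D3.sub (((D2.pow 2).const_mul (3/2)).div D1 hV1)).add
      ((dgx.pow 2).div D1 hV1)
    exact h.congr_d (by simp only [Pi.pow_apply]; push_cast; ring)
  have hUtx : pdt (pdx u) t x = pdx (pdx (pdx (pdx u))) t x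
        - (3 * pdx (pdx u) t x * pdx (pdx (pdx u)) t x * pdx u t x
            - (3/2) * (pdx (pdx u) t x)^3) / (pdx u t x)^2
        + (2 * g (u t x) * (2*C₁*(u t x) + C₂) * (pdx u t x)^2
            - (g (u t x))^2 * pdx (pdx u) t x) / (pdx u t x)^2 := by
    rw [pdt_pdx_comm' hu t x]
    show deriv (fun y => pdt u t y) x = _
    rw [hpdtu]
    exact dRHS.deriv
  -- time derivative of T
  have DT : HasDerivAt (fun s => g (u s x) / pdx u s x)
      (((2*C₁*(u t x) + C₂) * pdt u t x * pdx u t x - g (u t x) * pdt (pdx u) t x)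
        / (pdx u t x)^2) t := dgt.div dt1 hV1
  have hT : pdt (fun t x => (g (u t x)) / (pdx u t x)) t x
      = ((2*C₁*(u t x) + C₂) * pdt u t x * pdx u t x - g (u t x) * pdt (pdx u) t x)
        / (pdx u t x)^2 := DT.deriv
  -- spatial derivative of X
  have DX : HasDerivAt (fun y =>
      (pdx (pdx (pdx u)) t y) * (g (u t y)) / (pdx u t y)^2
        - (1/2) * (pdx (pdx u) t y)^2 * (g (u t y)) / (pdx u t y)^3
        - 2 * (pdx (pdx u) t y) * (deriv g (u t y)) / (pdx u t y)
        + (1/3) * (g (u t y))^3 / (pdx u t y)^3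
        + 2 * (pdx u t y) * (deriv (deriv g) (u t y)))
      ((pdx (pdx (pdx (pdx u))) t x * g (u t x) * (pdx u t x)^2
          + pdx (pdx (pdx u)) t x * (2*C₁*(u t x) + C₂) * (pdx u t x)^3
          - 2 * pdx (pdx (pdx u)) t x * g (u t x) * pdx u t x * pdx (pdx u) t x) / (pdx u t x)^4
        - (pdx (pdx u) t x * pdx (pdx (pdx u)) t x * g (u t x) * (pdx u t x)^3
            + (1/2) * (pdx (pdx u) t x)^2 * (2*C₁*(u t x) + C₂) * (pdx u t x)^4
            - (3/2) * (pdx (pdx u) t x)^3 * g (u t x) * (pdx u t x)^2) / (pdx u t x)^6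
        - (2 * pdx (pdx (pdx u)) t x * (2*C₁*(u t x) + C₂) * pdx u t x
            + 4 * C₁ * pdx (pdx u) t x * (pdx u t x)^2
            - 2 * (pdx (pdx u) t x)^2 * (2*C₁*(u t x) + C₂)) / (pdx u t x)^2
        + ((g (u t x))^2 * (2*C₁*(u t x) + C₂) * (pdx u t x)^4
            - (g (u t x))^3 * (pdx u t x)^2 * pdx (pdx u) t x) / (pdx u t x)^6
        + 4 * C₁ * pdx (pdx u) t x) x := by
    have dGpp : HasDerivAt (fun y => deriv (deriv g) (u t y)) (0 * pdx u t x) x := by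
      have hgpp : ∀ v, HasDerivAt (deriv (deriv g)) 0 v := by
        intro v
        have hdg2 : deriv (deriv g) = fun _ : ℝ => 2*C₁ :=
          funext fun w => (hg'' w).deriv
        rw [hdg2]
        exact hasDerivAt_const v (2*C₁)
      exact (hgpp (u t x)).comp x D0
    have t1 := (D3.mul dgx).div (D1.pow 2) (pow_ne_zero 2 hV1)
    have t2 := (((D2.pow 2).const_mul (1/2)).mul dgx).div (D1.pow 3) (pow_ne_zero 3 hV1)
    have t3 := ((D2.const_mul 2).mul dGp).div D1 hV1
    have t4 := ((dgx.pow 3).const_mul (1/3)).div (D1.pow 3) (pow_ne_zero 3 hV1)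
    have t5 := (D1.const_mul 2).mul dGpp
    have h := (((t1.sub t2).sub t3).add t4).add t5
    exact h.congr_d (by simp only [Pi.pow_apply, Pi.mul_apply]; rw [e1, e2]; push_cast; field_simp; ring)
  have hX : pdx (fun t x =>
      (pdx (pdx (pdx u)) t x) * (g (u t x)) / (pdx u t x)^2
        - (1/2) * (pdx (pdx u) t x)^2 * (g (u t x)) / (pdx u t x)^3
        - 2 * (pdx (pdx u) t x) * (deriv g (u t x)) / (pdx u t x)
        + (1/3) * (g (u t x))^3 / (pdx u t x)^3
        + 2 * (pdx u t x) * (deriv (deriv g) (u t x))) t x = _ := DX.deriv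
  rw [hT, hX, hUtx, hsol t x]
  simp only []
  field_simp
  ring
end

section
/- Let f be any smooth real function and let u(t,x) be any smooth real-valued function of two real variables (not assumed to solve any equation) with u_x(t,x) ≠ 0 for all (t,x). Define T̃₁ = (1/2)·u_xx²/u_x² + (1/3)·f(u)/u_x², X̃₁ = (1/2)·u_xx²·u_t/u_x³ − u_xx·u_tx/u_x² + (1/2)·u_t²/u_x² − (1/3)·u_t·f(u)/u_x³, and Q̃₁ = (u_tx·u_x − u_xx·u_t)/u_x³, all evaluated at (t,x). Then the characteristic identity ∂_t T̃₁ + ∂_x X̃₁ = Q̃₁ · (u_t − u_xxx + (3/2)·u_xx²/u_x − f(u)/u_x) holds at every point (t,x). (Q̃₁ is the conservation law multiplier admitted by the gKN equation for arbitrary f.) -/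
open Real

lemma one_le_top' : ((⊤ : ℕ∞) : WithTop ℕ∞) ≠ 0 := by
  simp

lemma top_add_one_le : ((⊤ : ℕ∞) : WithTop ℕ∞) + 1 ≤ ((⊤ : ℕ∞) : WithTop ℕ∞) := by
  exact_mod_cast le_top

variable {g : ℝ → ℝ → ℝ}

lemma hasFDerivAt_mkR (t x : ℝ) :
    HasFDerivAt (fun y : ℝ => ((t, y) : ℝ × ℝ)) (ContinuousLinearMap.inr ℝ ℝ ℝ) x := by
  have h : (fun y : ℝ => ((t, y) : ℝ × ℝ))
      = fun y => ((t, 0) : ℝ × ℝ) + ContinuousLinearMap.inr ℝ ℝ ℝ y := by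
    funext y; simp
  rw [h]
  exact ((ContinuousLinearMap.inr ℝ ℝ ℝ).hasFDerivAt).const_add _

lemma hasFDerivAt_mkL (t x : ℝ) :
    HasFDerivAt (fun s : ℝ => ((s, x) : ℝ × ℝ)) (ContinuousLinearMap.inl ℝ ℝ ℝ) t := by
  have h : (fun s : ℝ => ((s, x) : ℝ × ℝ))
      = fun s => ((0, x) : ℝ × ℝ) + ContinuousLinearMap.inl ℝ ℝ ℝ s := by
    funext s; simp
  rw [h]
  exact ((ContinuousLinearMap.inl ℝ ℝ ℝ).hasFDerivAt).const_add _

lemma uncurry_pdx (hg : ContDiff ℝ (⊤ : ℕ∞) (Function.uncurry g)) :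
    Function.uncurry (pdx g) = fun p : ℝ × ℝ => fderiv ℝ (Function.uncurry g) p (0, 1) := by
  funext p
  obtain ⟨t, x⟩ := p
  have h2 := ((hg.differentiable one_le_top' (t, x)).hasFDerivAt).comp x (hasFDerivAt_mkR t x)
  have h3 := h2.hasDerivAt
  simpa [pdx, Function.uncurry, Function.comp_def] using h3.deriv

lemma uncurry_pdt (hg : ContDiff ℝ (⊤ : ℕ∞) (Function.uncurry g)) :
    Function.uncurry (pdt g) = fun p : ℝ × ℝ => fderiv ℝ (Function.uncurry g) p (1, 0) := by
  funext p
  obtain ⟨t, x⟩ := p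
  have h2 := ((hg.differentiable one_le_top' (t, x)).hasFDerivAt).comp t (hasFDerivAt_mkL t x)
  have h3 := h2.hasDerivAt
  simpa [pdt, Function.uncurry, Function.comp_def] using h3.deriv

lemma contDiff_pdx (hg : ContDiff ℝ (⊤ : ℕ∞) (Function.uncurry g)) :
    ContDiff ℝ (⊤ : ℕ∞) (Function.uncurry (pdx g)) := by
  rw [uncurry_pdx hg]
  exact (hg.fderiv_right top_add_one_le).clm_apply contDiff_const

lemma contDiff_pdt (hg : ContDiff ℝ (⊤ : ℕ∞) (Function.uncurry g)) :
    ContDiff ℝ (⊤ : ℕ∞) (Function.uncurry (pdt g)) := by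
  rw [uncurry_pdt hg]
  exact (hg.fderiv_right top_add_one_le).clm_apply contDiff_const

lemma hasDerivAt_t (hg : ContDiff ℝ (⊤ : ℕ∞) (Function.uncurry g)) (t x : ℝ) :
    HasDerivAt (fun s => g s x) (pdt g t x) t := by
  have hd : DifferentiableAt ℝ (fun s => g s x) t :=
    (((hg.differentiable one_le_top' (t, x)).hasFDerivAt.comp t (hasFDerivAt_mkL t x)).differentiableAt :
      DifferentiableAt ℝ (Function.uncurry g ∘ fun s => (s, x)) t)
  exact hd.hasDerivAt

lemma hasDerivAt_x (hg : ContDiff ℝ (⊤ : ℕ∞) (Function.uncurry g)) (t x : ℝ) :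
    HasDerivAt (fun y => g t y) (pdx g t x) x := by
  have hd : DifferentiableAt ℝ (fun y => g t y) x :=
    ((hg.differentiable one_le_top' (t, x)).hasFDerivAt.comp x (hasFDerivAt_mkR t x)).differentiableAt
  exact hd.hasDerivAt

lemma pdt_pdx_comm (hg : ContDiff ℝ (⊤ : ℕ∞) (Function.uncurry g)) :
    pdt (pdx g) = pdx (pdt g) := by
  funext t x
  set U := Function.uncurry g with hU
  have hfd : ∀ y, HasFDerivAt U (fderiv ℝ U y) y := fun y =>
    (hg.differentiable one_le_top' y).hasFDerivAt
  have hU2 : HasFDerivAt (fderiv ℝ U) (fderiv ℝ (fderiv ℝ U) (t, x)) (t, x) :=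
    (((hg.fderiv_right top_add_one_le).differentiable one_le_top') (t, x)).hasFDerivAt
  have e1 : pdt (pdx g) t x = fderiv ℝ (fderiv ℝ U) (t, x) (1, 0) (0, 1) := by
    have hrw : (fun s : ℝ => pdx g s x) = fun s => fderiv ℝ U (s, x) (0, 1) := by
      funext s
      exact congrFun (uncurry_pdx hg) (s, x)
    have h2 := hU2.comp t (hasFDerivAt_mkL t x)
    have h3 := ((ContinuousLinearMap.apply ℝ ℝ (((0 : ℝ), (1 : ℝ)) : ℝ × ℝ)).hasFDerivAt).comp t h2
    have h4 := h3.hasDerivAt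
    have : pdt (pdx g) t x = deriv (fun s : ℝ => pdx g s x) t := rfl
    rw [this, hrw]
    simpa [Function.comp_def] using h4.deriv
  have e2 : pdx (pdt g) t x = fderiv ℝ (fderiv ℝ U) (t, x) (0, 1) (1, 0) := by
    have hrw : (fun y : ℝ => pdt g t y) = fun y => fderiv ℝ U (t, y) (1, 0) := by
      funext y
      exact congrFun (uncurry_pdt hg) (t, y)
    have h2 := hU2.comp x (hasFDerivAt_mkR t x)
    have h3 := ((ContinuousLinearMap.apply ℝ ℝ (((1 : ℝ), (0 : ℝ)) : ℝ × ℝ)).hasFDerivAt).comp x h2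
    have h4 := h3.hasDerivAt
    have : pdx (pdt g) t x = deriv (fun y : ℝ => pdt g t y) x := rfl
    rw [this, hrw]
    simpa [Function.comp_def] using h4.deriv
  rw [e1, e2, second_derivative_symmetric hfd hU2 (1, 0) (0, 1)]

/-- The characteristic identity for the multiplier `Q̃₁ = (u_tx u_x - u_xx u_t)/u_x³`
of the gKN equation, holding for an arbitrary smooth `u` (not assumed a solution). -/
theorem gKN_multiplier_Q1 (f : ℝ → ℝ) (hf : ContDiff ℝ (⊤ : ℕ∞) f)
    (u : ℝ → ℝ → ℝ) (hu : ContDiff ℝ (⊤ : ℕ∞) (Function.uncurry u))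
    (hux : ∀ t x, pdx u t x ≠ 0) :
    ∀ t x,
      pdt (fun t x => (1/2) * (pdx (pdx u) t x)^2 / (pdx u t x)^2 + (1/3) * f (u t x) / (pdx u t x)^2) t x
        + pdx (fun t x =>
            (1/2) * (pdx (pdx u) t x)^2 * (pdt u t x) / (pdx u t x)^3 - (pdx (pdx u) t x) * (pdx (pdt u) t x) / (pdx u t x)^2
              + (1/2) * (pdt u t x)^2 / (pdx u t x)^2 - (1/3) * (pdt u t x) * (f (u t x)) / (pdx u t x)^3) t x
      = ((pdx (pdt u) t x) * (pdx u t x) - (pdx (pdx u) t x) * (pdt u t x)) / (pdx u t x)^3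
          * ((pdt u t x) - (pdx (pdx (pdx u)) t x) + (3/2) * (pdx (pdx u) t x)^2 / (pdx u t x) - (f (u t x)) / (pdx u t x)) := by
  intro t x
  have hu1 : ContDiff ℝ (⊤ : ℕ∞) (Function.uncurry (pdx u)) := contDiff_pdx hu
  have hu2 : ContDiff ℝ (⊤ : ℕ∞) (Function.uncurry (pdx (pdx u))) := contDiff_pdx hu1
  have hut : ContDiff ℝ (⊤ : ℕ∞) (Function.uncurry (pdt u)) := contDiff_pdt hu
  have hutx : ContDiff ℝ (⊤ : ℕ∞) (Function.uncurry (pdx (pdt u))) := contDiff_pdx hut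
  have h0 : pdx u t x ≠ 0 := hux t x
  have h2 : (pdx u t x) ^ 2 ≠ 0 := pow_ne_zero 2 h0
  have h3 : (pdx u t x) ^ 3 ≠ 0 := pow_ne_zero 3 h0
  -- commutation facts
  have comm : pdt (pdx u) = pdx (pdt u) := pdt_pdx_comm hu
  have comm2 : pdt (pdx (pdx u)) t x = pdx (pdx (pdt u)) t x := by
    rw [congrFun (congrFun (pdt_pdx_comm hu1) t) x, comm]
  -- t-direction derivatives
  have hA_t : HasDerivAt (fun s => pdx u s x) (pdx (pdt u) t x) t := by
    have h := hasDerivAt_t hu1 t x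
    rwa [comm] at h
  have hB_t : HasDerivAt (fun s => pdx (pdx u) s x) (pdx (pdx (pdt u)) t x) t := by
    have h := hasDerivAt_t hu2 t x
    rwa [comm2] at h
  have hU_t : HasDerivAt (fun s => u s x) (pdt u t x) t := hasDerivAt_t hu t x
  have hF_t : HasDerivAt (fun s => f (u s x)) (deriv f (u t x) * pdt u t x) t :=
    ((hf.differentiable one_le_top' (u t x)).hasDerivAt).comp t hU_t
  -- x-direction derivatives
  have hU_x : HasDerivAt (fun y => u t y) (pdx u t x) x := hasDerivAt_x hu t x
  have hA_x : HasDerivAt (fun y => pdx u t y) (pdx (pdx u) t x) x := hasDerivAt_x hu1 t x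
  have hB_x : HasDerivAt (fun y => pdx (pdx u) t y) (pdx (pdx (pdx u)) t x) x := hasDerivAt_x hu2 t x
  have hP_x : HasDerivAt (fun y => pdt u t y) (pdx (pdt u) t x) x := hasDerivAt_x hut t x
  have hQ_x : HasDerivAt (fun y => pdx (pdt u) t y) (pdx (pdx (pdt u)) t x) x := hasDerivAt_x hutx t x
  have hF_x : HasDerivAt (fun y => f (u t y)) (deriv f (u t x) * pdx u t x) x :=
    ((hf.differentiable one_le_top' (u t x)).hasDerivAt).comp x hU_x
  -- the T term
  have hT := (((hB_t.pow 2).const_mul ((1:ℝ)/2)).div (hA_t.pow 2) h2).add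
    ((hF_t.const_mul ((1:ℝ)/3)).div (hA_t.pow 2) h2)
  -- the X term
  have tm1 := (((hB_x.pow 2).const_mul ((1:ℝ)/2)).mul hP_x).div (hA_x.pow 3) h3
  have tm2 := (hB_x.mul hQ_x).div (hA_x.pow 2) h2
  have tm3 := ((hP_x.pow 2).const_mul ((1:ℝ)/2)).div (hA_x.pow 2) h2
  have tm4 := ((hP_x.const_mul ((1:ℝ)/3)).mul hF_x).div (hA_x.pow 3) h3
  have hX := ((tm1.sub tm2).add tm3).sub tm4
  have e1 : pdt (fun t x => (1/2) * (pdx (pdx u) t x)^2 / (pdx u t x)^2 + (1/3) * f (u t x) / (pdx u t x)^2) t x = _ := hT.deriv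
  have e2 : pdx (fun t x =>
            (1/2) * (pdx (pdx u) t x)^2 * (pdt u t x) / (pdx u t x)^3 - (pdx (pdx u) t x) * (pdx (pdt u) t x) / (pdx u t x)^2
              + (1/2) * (pdt u t x)^2 / (pdx u t x)^2 - (1/3) * (pdt u t x) * (f (u t x)) / (pdx u t x)^3) t x = _ := hX.deriv
  rw [e1, e2]
  simp only [Pi.pow_apply, Pi.mul_apply]
  field_simp
  ring
end
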